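/- Let S = ℤ[x₁,x₂,c₂,c₃]/(2c₃) and let μ : S → S be the ring automorphism induced by exchanging x₁ and x₂ and fixing c₂ and c₃ (the ideal (2c₃) is stable under this exchange). Then the subring of μ-invariant elements of S is equal to the subring of S generated by the classes of x₁+x₂, x₁·x₂, c₂ and c₃. -/

import Mathlib

open MvPolynomial

/-- The ideal `(2c₃)` of `ℤ[x₁,x₂,c₂,c₃] = MvPolynomial (Fin 4) ℤ`,
where `x₁ = X 0`, `x₂ = X 1`, `c₂ = X 2`, `c₃ = X 3`. -/
noncomputable def Jrel : Ideal (MvPolynomial (Fin 4) ℤ) :=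
  Ideal.span {2 * X 3}

namespace Stmt7Aux

abbrev R := MvPolynomial (Fin 4) ℤ

lemma primeX0 : Prime (X (0:Fin 4) : R) := by
  have := MulEquiv.prime_iff (finSuccEquiv ℤ 3).toRingEquiv.toMulEquiv (p := (X (0:Fin 4) : R))
  rw [← this]
  simpa [finSuccEquiv_X_zero] using Polynomial.prime_X (R := MvPolynomial (Fin 3) ℤ)

lemma primeX3 : Prime (X (3:Fin 4) : R) := by
  have := MulEquiv.prime_iff (renameEquiv ℤ (Equiv.swap (0:Fin 4) 3)).toRingEquiv.toMulEquiv
    (p := (X (3:Fin 4) : R))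
  rw [← this]
  simpa using primeX0

lemma prime2 : Prime (2 : R) := by
  rw [show (2 : R) = C 2 by simp]
  exact (MvPolynomial.prime_C_iff (Fin 4)).2 Int.prime_two

noncomputable def f : Fin 4 → ℤ := fun i => if i = 1 then 1 else 0

lemma not_two_dvd : ¬ (2 : R) ∣ (X 1 - X 0) := by
  rintro ⟨g, hg⟩
  have := congrArg (eval f) hg
  simp [f] at this
  omega

lemma not_X3_dvd : ¬ (X (3:Fin 4) : R) ∣ (X 1 - X 0) := by
  rintro ⟨g, hg⟩
  have := congrArg (eval f) hg
  simp [f] at this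

lemma key {b g : R} (h : (X 1 - X 0) * b = 2 * X 3 * g) : ∃ h, b = 2 * X 3 * h := by
  have h2 : (2 : R) ∣ (X 1 - X 0) * b := ⟨X 3 * g, by rw [h]; ring⟩
  rcases (prime2.2.2 _ _ h2).resolve_left not_two_dvd with ⟨b₁, rfl⟩
  have h3 : (X (3:Fin 4) : R) ∣ (X 1 - X 0) * b₁ := by
    refine ⟨g, ?_⟩
    have : (2:R) * ((X 1 - X 0) * b₁) = 2 * (X 3 * g) := by linear_combination h
    exact mul_left_cancel₀ prime2.ne_zero this
  rcases (primeX3.2.2 _ _ h3).resolve_left not_X3_dvd with ⟨h', rfl⟩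
  exact ⟨h', by ring⟩

noncomputable def T : Subring R := Subring.closure {X 0 + X 1, X 0 * X 1, X 2, X 3}

lemma he1 : (X 0 + X 1 : R) ∈ T := Subring.subset_closure (by simp)
lemma he2 : (X 0 * X 1 : R) ∈ T := Subring.subset_closure (by simp)
lemma hc2 : (X 2 : R) ∈ T := Subring.subset_closure (by simp)
lemma hc3 : (X 3 : R) ∈ T := Subring.subset_closure (by simp)

lemma decomp (p : R) : ∃ a ∈ T, ∃ b ∈ T, p = a + X 0 * b := by
  induction p using MvPolynomial.induction_on with
  | C r =>
    exact ⟨C r, (eq_intCast (C : ℤ →+* R) r) ▸ intCast_mem T r, 0, T.zero_mem, by ring⟩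
  | add p q hp hq =>
    obtain ⟨a, ha, b, hb, rfl⟩ := hp
    obtain ⟨a', ha', b', hb', rfl⟩ := hq
    exact ⟨a + a', T.add_mem ha ha', b + b', T.add_mem hb hb', by ring⟩
  | mul_X p n hp =>
    obtain ⟨a, ha, b, hb, rfl⟩ := hp
    fin_cases n
    · exact ⟨-(X 0 * X 1 * b), T.neg_mem (T.mul_mem he2 hb),
        a + (X 0 + X 1) * b, T.add_mem ha (T.mul_mem he1 hb), by
          show (a + X 0 * b) * X 0 = _; ring⟩
    · exact ⟨a * (X 0 + X 1) + X 0 * X 1 * b,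
        T.add_mem (T.mul_mem ha he1) (T.mul_mem he2 hb), -a, T.neg_mem ha, by
          show (a + X 0 * b) * X 1 = _; ring⟩
    · exact ⟨a * X 2, T.mul_mem ha hc2, b * X 2, T.mul_mem hb hc2, by
        show (a + X 0 * b) * X 2 = _; ring⟩
    · exact ⟨a * X 3, T.mul_mem ha hc3, b * X 3, T.mul_mem hb hc3, by
        show (a + X 0 * b) * X 3 = _; ring⟩

lemma swap_e1 : rename (Equiv.swap (0:Fin 4) 1) (X 0 + X 1 : R) = X 0 + X 1 := by
  simp [Equiv.swap_apply_left, Equiv.swap_apply_right, add_comm]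

lemma swap_e2 : rename (Equiv.swap (0:Fin 4) 1) (X 0 * X 1 : R) = X 0 * X 1 := by
  simp [Equiv.swap_apply_left, Equiv.swap_apply_right, mul_comm]

lemma swap_c2 : rename (Equiv.swap (0:Fin 4) 1) (X 2 : R) = X 2 := by
  rw [rename_X, Equiv.swap_apply_of_ne_of_ne (by decide) (by decide)]

lemma swap_c3 : rename (Equiv.swap (0:Fin 4) 1) (X 3 : R) = X 3 := by
  rw [rename_X, Equiv.swap_apply_of_ne_of_ne (by decide) (by decide)]

lemma Tfix {t : R} (ht : t ∈ T) : rename (Equiv.swap (0:Fin 4) 1) t = t := by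
  have hle : T ≤ RingHom.eqLocus (rename (Equiv.swap (0:Fin 4) 1)).toRingHom
      (RingHom.id R) := by
    apply Subring.closure_le.2
    rintro x (rfl | rfl | rfl | rfl)
    · exact swap_e1
    · exact swap_e2
    · exact swap_c2
    · exact swap_c3
  exact hle ht

end Stmt7Aux

open Stmt7Aux

/-- Let `S = ℤ[x₁,x₂,c₂,c₃]/(2c₃)` and `μ : S → S` the ring automorphism induced by
exchanging `x₁` and `x₂` (and fixing `c₂, c₃`).  Then the `μ`-invariant elements of `S`
are exactly the elements of the subring generated by the classes of `x₁+x₂`, `x₁·x₂`,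
`c₂` and `c₃`. -/
theorem stmt_7
    (μ : (MvPolynomial (Fin 4) ℤ ⧸ Jrel) ≃+* (MvPolynomial (Fin 4) ℤ ⧸ Jrel))
    (hμ : ∀ p : MvPolynomial (Fin 4) ℤ,
      μ (Ideal.Quotient.mk Jrel p) = Ideal.Quotient.mk Jrel (rename (Equiv.swap (0 : Fin 4) 1) p)) :
    ∀ s : MvPolynomial (Fin 4) ℤ ⧸ Jrel,
      μ s = s ↔ s ∈ Subring.closure
        ({Ideal.Quotient.mk Jrel (X 0 + X 1), Ideal.Quotient.mk Jrel (X 0 * X 1),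
          Ideal.Quotient.mk Jrel (X 2), Ideal.Quotient.mk Jrel (X 3)} :
            Set (MvPolynomial (Fin 4) ℤ ⧸ Jrel)) := by
  intro s
  set mk := Ideal.Quotient.mk Jrel
  constructor
  · intro hfix
    obtain ⟨p, rfl⟩ := Ideal.Quotient.mk_surjective s
    obtain ⟨a, ha, b, hb, rfl⟩ := decomp p
    have hswap : mk (rename (Equiv.swap (0:Fin 4) 1) (a + X 0 * b)) = mk (a + X 0 * b) := by
      rw [← hμ]; exact hfix
    have hren : rename (Equiv.swap (0:Fin 4) 1) (a + X 0 * b) = a + X 1 * b := by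
      rw [map_add, map_mul, Tfix ha, Tfix hb, rename_X, Equiv.swap_apply_left]
    have hmem : (X 1 - X 0) * b ∈ Jrel := by
      have := (Ideal.Quotient.eq (I := Jrel)).1 hswap
      rw [hren] at this
      convert this using 1
      ring
    obtain ⟨g, hg⟩ := Ideal.mem_span_singleton.1 hmem
    obtain ⟨h, rfl⟩ := key hg
    have hpa : mk (a + X 0 * (2 * X 3 * h)) = mk a := by
      rw [Ideal.Quotient.eq]
      refine Ideal.mem_span_singleton.2 ⟨X 0 * h, by ring⟩
    rw [hpa]
    have hle : T ≤ Subring.comap (mk : MvPolynomial (Fin 4) ℤ →+* _)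
        (Subring.closure {mk (X 0 + X 1), mk (X 0 * X 1), mk (X 2), mk (X 3)}) := by
      apply Subring.closure_le.2
      rintro x (rfl | rfl | rfl | rfl) <;>
        exact Subring.subset_closure (by simp)
    exact hle ha
  · intro hs
    have hle : Subring.closure {mk (X 0 + X 1), mk (X 0 * X 1), mk (X 2), mk (X 3)} ≤
        RingHom.eqLocus (μ : _ →+* _) (RingHom.id _) := by
      apply Subring.closure_le.2
      rintro x (rfl | rfl | rfl | rfl)
      · show μ _ = _
        rw [hμ, swap_e1]; rfl
      · show μ _ = _
        rw [hμ, swap_e2]; rfl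
      · show μ _ = _
        rw [hμ, swap_c2]; rfl
      · show μ _ = _
        rw [hμ, swap_c3]; rfl
    exact hle hs
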